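/- (Regular basic lifting) Let P_b be a g_b-regular (K_b, f_b, Z_b, K_b(f_b−Z_b)/g_b) PDA and P_l a g_c-regular (m, n, e, m(n−e)/g_c) PDA. Replace each ∗ of P_b by the all-∗ n×m block and each integer of P_b by an integer-disjoint copy of P_l (distinct integers of P_b getting disjoint integer sets). The result is a g_b·g_c-regular (K_b m, f_b n, Z_b n + (f_b−Z_b)e, (K_b(f_b−Z_b)/g_b)·(m(n−e)/g_c)) PDA. -/
import Mathlib


open Finset

/-- Number of stars (`none`) in column `k` of the array `P`. -/
def colStars {f K : ℕ} (P : Fin f → Fin K → Option ℕ) (k : Fin K) : ℕ :=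
  (Finset.univ.filter fun j => P j k = none).card

/-- `P` is a `(K, f, Z, S)` placement delivery array: an `f × K` array over `{∗} ∪ S`
(`none` encodes `∗`) with exactly `Z` stars in each column, every integer of `S`
occurring at least once (and all integer entries lying in `S`), satisfying the
Blackburn property. -/
def IsPDA {f K : ℕ} (P : Fin f → Fin K → Option ℕ) (Z : ℕ) (S : Finset ℕ) : Prop :=
  (∀ k, colStars P k = Z) ∧
  (∀ s ∈ S, ∃ j k, P j k = some s) ∧
  (∀ j k s, P j k = some s → s ∈ S) ∧
  (∀ j₁ k₁ j₂ k₂ s, (j₁, k₁) ≠ (j₂, k₂) →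
    P j₁ k₁ = some s → P j₂ k₂ = some s → P j₁ k₂ = none ∧ P j₂ k₁ = none)

/-- Every integer of `S` appears exactly `g` times in the array `P`. -/
def IsRegularPDA {f K : ℕ} (P : Fin f → Fin K → Option ℕ) (S : Finset ℕ) (g : ℕ) : Prop :=
  ∀ s ∈ S, ((Finset.univ : Finset (Fin f × Fin K)).filter
    (fun jk => P jk.1 jk.2 = some s)).card = g

/-- `P₀` and `P₁` are Blackburn-compatible with respect to `Pstar`. -/
def BBCompat {n m : ℕ} (P₀ P₁ Pstar : Fin n → Fin m → Option ℕ) : Prop :=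
  ∀ i₀ j₀ i₁ j₁ s, P₀ i₀ j₀ = some s → P₁ i₁ j₁ = some s →
    Pstar i₀ j₁ = none ∧ Pstar i₁ j₀ = none

/-- `Ig n t` is the `n × n` array with the integer `t` on the main diagonal and `∗`
elsewhere. -/
def Ig (n t : ℕ) : Fin n → Fin n → Option ℕ := fun i j => if i = j then some t else none

/-- Block-row index of a global index for an array built from `a × a` grids of `b`-sized
blocks. -/
def blkIdx {a b : ℕ} (j : Fin (a * b)) : Fin a :=
  ⟨(j : ℕ) / b, Nat.div_lt_of_lt_mul (Nat.mul_comm a b ▸ j.isLt)⟩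

/-- Within-block index of a global index. -/
def inIdx {a b : ℕ} (j : Fin (a * b)) : Fin b :=
  ⟨(j : ℕ) % b, Nat.mod_lt _ (by
    rcases Nat.eq_zero_or_pos b with h | h
    · exact absurd j.isLt (by simp [h])
    · exact h)⟩

/-- Basic block lifting: every `∗` of the base array becomes an all-`∗` `n × m` block and
every integer `i` becomes the constituent array `Pc i`. -/
def blockLift {K f m n : ℕ} (Pb : Fin f → Fin K → Option ℕ)
    (Pc : ℕ → Fin n → Fin m → Option ℕ) :
    Fin (f * n) → Fin (K * m) → Option ℕ :=
  fun j k =>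
    match Pb (blkIdx j) (blkIdx k) with
    | none => none
    | some i => Pc i (inIdx j) (inIdx k)

def mkIdx {a b : ℕ} (J : Fin a) (x : Fin b) : Fin (a * b) :=
  ⟨(J : ℕ) * b + x, by
    have hx := x.isLt
    calc (J : ℕ) * b + (x : ℕ) < (J : ℕ) * b + b := by omega
      _ = ((J : ℕ) + 1) * b := by ring
      _ ≤ a * b := Nat.mul_le_mul J.isLt le_rfl⟩

lemma blkIdx_mkIdx {a b : ℕ} (J : Fin a) (x : Fin b) : blkIdx (mkIdx J x) = J := by
  have hb : 0 < b := x.pos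
  apply Fin.ext
  show ((J : ℕ) * b + x) / b = J
  rw [Nat.mul_comm (J : ℕ) b, Nat.mul_add_div hb, Nat.div_eq_of_lt x.isLt]
  omega

lemma inIdx_mkIdx {a b : ℕ} (J : Fin a) (x : Fin b) : inIdx (mkIdx J x) = x := by
  apply Fin.ext
  show ((J : ℕ) * b + x) % b = x
  rw [Nat.mul_comm (J : ℕ) b, Nat.mul_add_mod, Nat.mod_eq_of_lt x.isLt]

lemma mkIdx_blkIdx_inIdx {a b : ℕ} (j : Fin (a * b)) : mkIdx (blkIdx j) (inIdx j) = j := by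
  apply Fin.ext
  show (j : ℕ) / b * b + (j : ℕ) % b = j
  rw [Nat.mul_comm]
  exact Nat.div_add_mod _ _

lemma card_filter_prod' {α β : Type*} [Fintype α] [Fintype β] (p : α × β → Prop)
    [DecidablePred p] :
    (univ.filter p).card = ∑ a : α, (univ.filter fun b : β => p (a, b)).card := by
  rw [Finset.card_filter, Fintype.sum_prod_type]
  exact Finset.sum_congr rfl fun a _ => (Finset.card_filter _ _).symm

lemma card_filter_fin_mul {a b : ℕ} (p : Fin (a * b) → Prop) [DecidablePred p] :
    (univ.filter p).card = ∑ J : Fin a, (univ.filter fun x : Fin b => p (mkIdx J x)).card := by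
  have h1 : (univ.filter p).card
      = (univ.filter fun q : Fin a × Fin b => p (mkIdx q.1 q.2)).card := by
    apply Finset.card_bij' (fun j _ => (blkIdx j, inIdx j)) (fun q _ => mkIdx q.1 q.2)
    · intro j hj
      simp only [mem_filter, mem_univ, true_and] at hj ⊢
      rwa [mkIdx_blkIdx_inIdx]
    · intro q hq
      simp only [mem_filter, mem_univ, true_and] at hq ⊢
      exact hq
    · intro j _; exact mkIdx_blkIdx_inIdx j
    · intro q _; simp [blkIdx_mkIdx, inIdx_mkIdx]
  rw [h1, card_filter_prod']

/-- **Regular basic lifting.** Lifting a `g_b`-regular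
`(K_b, f_b, Z_b, K_b(f_b−Z_b)/g_b)` PDA by integer-disjoint copies (via relabelings `φ i`)
of a `g_c`-regular `(m, n, e, m(n−e)/g_c)` PDA, with all-`∗` blocks replacing stars, yields
a `g_b·g_c`-regular
`(K_b m, f_b n, Z_b n + (f_b−Z_b)e, (K_b(f_b−Z_b)/g_b)·(m(n−e)/g_c))` PDA. -/
theorem stmt_7 {Kb fb m n Zb e gb gc : ℕ} (Sb Sl : Finset ℕ)
    (Pb : Fin fb → Fin Kb → Option ℕ)
    (hPb : IsPDA Pb Zb Sb) (hregb : IsRegularPDA Pb Sb gb)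
    (hcardb : Sb.card = Kb * (fb - Zb) / gb)
    (Pl : Fin n → Fin m → Option ℕ)
    (hPl : IsPDA Pl e Sl) (hregl : IsRegularPDA Pl Sl gc)
    (hcardl : Sl.card = m * (n - e) / gc)
    (φ : ℕ → ℕ → ℕ)
    (hinj : ∀ i ∈ Sb, Set.InjOn (φ i) ↑Sl)
    (hdisj : ∀ i ∈ Sb, ∀ i' ∈ Sb, i ≠ i' →
      Disjoint (Sl.image (φ i)) (Sl.image (φ i'))) :
    IsPDA (blockLift Pb fun i a b => (Pl a b).map (φ i))
        (Zb * n + (fb - Zb) * e) (Sb.biUnion fun i => Sl.image (φ i)) ∧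
    IsRegularPDA (blockLift Pb fun i a b => (Pl a b).map (φ i))
        (Sb.biUnion fun i => Sl.image (φ i)) (gb * gc) ∧
    (Sb.biUnion fun i => Sl.image (φ i)).card =
      (Kb * (fb - Zb) / gb) * (m * (n - e) / gc) := by
  classical
  set P' : Fin (fb * n) → Fin (Kb * m) → Option ℕ :=
    blockLift Pb (fun i a b => (Pl a b).map (φ i)) with hP'def
  -- decomposition of entries
  have hdecomp : ∀ (j : Fin (fb * n)) (k : Fin (Kb * m)) (s : ℕ), P' j k = some s →
      ∃ i t, i ∈ Sb ∧ t ∈ Sl ∧ Pb (blkIdx j) (blkIdx k) = some i ∧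
        Pl (inIdx j) (inIdx k) = some t ∧ φ i t = s := by
    intro j k s h
    rcases hPbjk : Pb (blkIdx j) (blkIdx k) with _ | i'
    · simp [hP'def, blockLift, hPbjk] at h
    · simp only [hP'def, blockLift, hPbjk] at h
      rw [Option.map_eq_some_iff] at h
      obtain ⟨t', ht'Pl, ht'eq⟩ := h
      exact ⟨i', t', hPb.2.2.1 _ _ _ hPbjk, hPl.2.2.1 _ _ _ ht'Pl, rfl, ht'Pl, ht'eq⟩
  -- characterization of entries equal to some s = φ i t
  have hchar : ∀ s i t, i ∈ Sb → t ∈ Sl → φ i t = s →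
      ∀ (j : Fin (fb * n)) (k : Fin (Kb * m)),
      P' j k = some s ↔ (Pb (blkIdx j) (blkIdx k) = some i ∧ Pl (inIdx j) (inIdx k) = some t) := by
    intro s i t hi ht hs j k
    constructor
    · intro h
      obtain ⟨i', t', hi', ht', hPbjk, hPljk, heq⟩ := hdecomp j k s h
      have hii : i' = i := by
        by_contra hne
        have hd := hdisj i' hi' i hi hne
        have h1 : s ∈ Sl.image (φ i') := mem_image.2 ⟨t', ht', heq⟩
        have h2 : s ∈ Sl.image (φ i) := mem_image.2 ⟨t, ht, hs⟩
        exact (Finset.disjoint_left.1 hd h1) h2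
      subst hii
      have htt : t' = t := hinj i' hi' ht' ht (hs ▸ heq)
      exact ⟨hPbjk, htt ▸ hPljk⟩
    · rintro ⟨h1, h2⟩
      simp [hP'def, blockLift, h1, h2, hs]
  refine ⟨⟨?_, ?_, ?_, ?_⟩, ?_, ?_⟩
  · -- column stars
    intro k
    show (univ.filter fun j => P' j k = none).card = _
    rw [card_filter_fin_mul]
    have hJ : ∀ J : Fin fb, (univ.filter fun x : Fin n => P' (mkIdx J x) k = none).card
        = if Pb J (blkIdx k) = none then n else e := by
      intro J
      by_cases hb : Pb J (blkIdx k) = none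
      · rw [if_pos hb]
        have : ∀ x : Fin n, P' (mkIdx J x) k = none := by
          intro x
          simp [hP'def, blockLift, blkIdx_mkIdx, inIdx_mkIdx, hb]
        simp [this]
      · rw [if_neg hb]
        rcases Option.ne_none_iff_exists'.1 hb with ⟨i, hi⟩
        have heq : (univ.filter fun x : Fin n => P' (mkIdx J x) k = none)
            = univ.filter (fun x : Fin n => Pl x (inIdx k) = none) := by
          apply Finset.filter_congr
          intro x _
          simp [hP'def, blockLift, blkIdx_mkIdx, inIdx_mkIdx, hi]
        rw [heq]
        exact hPl.1 (inIdx k)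
    rw [Finset.sum_congr rfl (fun J _ => hJ J), Finset.sum_ite, Finset.sum_const,
      Finset.sum_const, smul_eq_mul, smul_eq_mul]
    have h1 : (univ.filter fun J => Pb J (blkIdx k) = none).card = Zb := hPb.1 (blkIdx k)
    have h2 : (univ.filter fun J => ¬ Pb J (blkIdx k) = none).card = fb - Zb := by
      have h3 := Finset.card_filter_add_card_filter_not
        (s := (univ : Finset (Fin fb))) (p := fun J => Pb J (blkIdx k) = none)
      rw [h1, card_univ, Fintype.card_fin] at h3
      omega
    rw [h1, h2]
  · -- every symbol occurs
    intro s hs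
    rw [Finset.mem_biUnion] at hs
    obtain ⟨i, hi, hs⟩ := hs
    rw [Finset.mem_image] at hs
    obtain ⟨t, ht, hst⟩ := hs
    obtain ⟨j, k, hjk⟩ := hPb.2.1 i hi
    obtain ⟨x, y, hxy⟩ := hPl.2.1 t ht
    refine ⟨mkIdx j x, mkIdx k y, (hchar s i t hi ht hst _ _).2 ?_⟩
    rw [blkIdx_mkIdx, blkIdx_mkIdx, inIdx_mkIdx, inIdx_mkIdx]
    exact ⟨hjk, hxy⟩
  · -- symbols lie in S
    intro j k s h
    obtain ⟨i, t, hi, ht, _, _, heq⟩ := hdecomp j k s h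
    exact Finset.mem_biUnion.2 ⟨i, hi, Finset.mem_image.2 ⟨t, ht, heq⟩⟩
  · -- Blackburn property
    intro j1 k1 j2 k2 s hne h1 h2
    obtain ⟨i1, t1, hi1, ht1, hPb1, hPl1, heq1⟩ := hdecomp j1 k1 s h1
    obtain ⟨i2, t2, hi2, ht2, hPb2, hPl2, heq2⟩ := hdecomp j2 k2 s h2
    have hii : i1 = i2 := by
      by_contra hne'
      have hd := hdisj i1 hi1 i2 hi2 hne'
      have m1 : s ∈ Sl.image (φ i1) := mem_image.2 ⟨t1, ht1, heq1⟩
      have m2 : s ∈ Sl.image (φ i2) := mem_image.2 ⟨t2, ht2, heq2⟩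
      exact (Finset.disjoint_left.1 hd m1) m2
    subst hii
    have htt : t1 = t2 := hinj i1 hi1 ht1 ht2 (heq1.trans heq2.symm)
    subst htt
    by_cases hblk : ((blkIdx j1 : Fin fb), (blkIdx k1 : Fin Kb)) = (blkIdx j2, blkIdx k2)
    · have hbj : (blkIdx j1 : Fin fb) = blkIdx j2 := congrArg Prod.fst hblk
      have hbk : (blkIdx k1 : Fin Kb) = blkIdx k2 := congrArg Prod.snd hblk
      have hinne : ((inIdx j1 : Fin n), (inIdx k1 : Fin m)) ≠ (inIdx j2, inIdx k2) := by
        intro hEq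
        apply hne
        have hij : (inIdx j1 : Fin n) = inIdx j2 := congrArg Prod.fst hEq
        have hik : (inIdx k1 : Fin m) = inIdx k2 := congrArg Prod.snd hEq
        have ej : j1 = j2 := by
          rw [← mkIdx_blkIdx_inIdx j1, ← mkIdx_blkIdx_inIdx j2, hbj, hij]
        have ek : k1 = k2 := by
          rw [← mkIdx_blkIdx_inIdx k1, ← mkIdx_blkIdx_inIdx k2, hbk, hik]
        rw [ej, ek]
      obtain ⟨hn1, hn2⟩ := hPl.2.2.2 _ _ _ _ t1 hinne hPl1 hPl2
      constructor
      · have : Pb (blkIdx j1) (blkIdx k2) = some i1 := by rw [← hbk]; exact hPb1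
        simp [hP'def, blockLift, this, hn1]
      · have : Pb (blkIdx j2) (blkIdx k1) = some i1 := by rw [hbk]; exact hPb2
        simp [hP'def, blockLift, this, hn2]
    · obtain ⟨hn1, hn2⟩ := hPb.2.2.2 _ _ _ _ i1 hblk hPb1 hPb2
      constructor
      · simp [hP'def, blockLift, hn1]
      · simp [hP'def, blockLift, hn2]
  · -- regularity
    intro s hs
    rw [Finset.mem_biUnion] at hs
    obtain ⟨i, hi, hs⟩ := hs
    rw [Finset.mem_image] at hs
    obtain ⟨t, ht, hst⟩ := hs
    have hbij : ((univ : Finset (Fin (fb * n) × Fin (Kb * m))).filter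
          (fun jk => P' jk.1 jk.2 = some s)).card
        = (((univ : Finset (Fin fb × Fin Kb)).filter (fun JK => Pb JK.1 JK.2 = some i)) ×ˢ
           ((univ : Finset (Fin n × Fin m)).filter (fun xy => Pl xy.1 xy.2 = some t))).card := by
      refine Finset.card_bij'
        (fun jk _ => ((blkIdx jk.1, blkIdx jk.2), (inIdx jk.1, inIdx jk.2)))
        (fun q _ => (mkIdx q.1.1 q.2.1, mkIdx q.1.2 q.2.2)) ?_ ?_ ?_ ?_
      · intro jk hjk
        rw [mem_filter] at hjk
        have := (hchar s i t hi ht hst _ _).1 hjk.2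
        simp only [Finset.mem_product, mem_filter, mem_univ, true_and]
        exact this
      · intro q hq
        simp only [Finset.mem_product, mem_filter, mem_univ, true_and] at hq
        rw [mem_filter]
        refine ⟨mem_univ _, (hchar s i t hi ht hst _ _).2 ?_⟩
        rw [blkIdx_mkIdx, blkIdx_mkIdx, inIdx_mkIdx, inIdx_mkIdx]
        exact hq
      · intro jk _
        simp [mkIdx_blkIdx_inIdx]
      · intro q _
        simp [blkIdx_mkIdx, inIdx_mkIdx]
    rw [hbij, Finset.card_product, hregb i hi, hregl t ht]
  · -- cardinality
    rw [Finset.card_biUnion hdisj]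
    have : ∀ i ∈ Sb, (Sl.image (φ i)).card = Sl.card := fun i hi =>
      Finset.card_image_of_injOn (hinj i hi)
    rw [Finset.sum_congr rfl this, Finset.sum_const, smul_eq_mul, hcardb, hcardl]
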